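/- For any n ≥ 1, any vertex i, and any t ∈ ℝ, the return fidelity in the complete graph satisfies |[exp(-i·t·H(K_n))]_{ii}| ≥ 1 - 2/n. -/

import Mathlib

open NormedSpace

/-- exp of a scalar multiple of an idempotent in a Banach algebra. -/
lemma exp_smul_idem {𝔸 : Type*} [NormedRing 𝔸] [NormedAlgebra ℂ 𝔸] [CompleteSpace 𝔸]
    (P : 𝔸) (hP : P * P = P) (s : ℂ) :
    exp (s • P) = 1 + (exp s - 1) • P := by
  have hpow : ∀ k : ℕ, P ^ (k + 1) = P := by
    intro k
    induction k with
    | zero => simp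
    | succ k ih => rw [pow_succ, ih, hP]
  have hsum := expSeries_summable' (𝕂 := ℂ) (s • P)
  have hsumC := expSeries_summable' (𝕂 := ℂ) s
  rw [exp_eq_tsum (𝕂 := ℂ)]
  beta_reduce
  rw [Summable.tsum_eq_zero_add hsum]
  have h1 : ∀ k : ℕ, ((Nat.factorial (k+1) : ℂ)⁻¹ : ℂ) • (s • P) ^ (k + 1)
      = (((Nat.factorial (k+1) : ℂ)⁻¹ : ℂ) • s ^ (k + 1)) • P := by
    intro k
    rw [smul_pow, hpow, smul_smul, smul_eq_mul]
  have h2 : (∑' k : ℕ, ((Nat.factorial (k+1) : ℂ)⁻¹ : ℂ) • (s • P) ^ (k + 1))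
      = (∑' k : ℕ, ((Nat.factorial (k+1) : ℂ)⁻¹ : ℂ) • s ^ (k + 1)) • P := by
    simp_rw [h1]
    exact Summable.tsum_smul_const ((summable_nat_add_iff (f := fun n : ℕ => ((Nat.factorial n : ℂ))⁻¹ • s ^ n) 1).2 hsumC) P
  have h3 : (∑' k : ℕ, ((Nat.factorial (k+1) : ℂ)⁻¹ : ℂ) • s ^ (k + 1)) = exp s - 1 := by
    have := Summable.tsum_eq_zero_add hsumC
    rw [exp_eq_tsum (𝕂 := ℂ)]
    simp only [pow_zero] at this ⊢
    rw [this]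
    simp
  rw [h2, h3]
  simp

lemma matrix_exp_smul_idem (n : ℕ) (P : Matrix (Fin n) (Fin n) ℂ) (hP : P * P = P) (s : ℂ) :
    exp (s • P) = 1 + (exp s - 1) • P := by
  letI : SeminormedRing (Matrix (Fin n) (Fin n) ℂ) := Matrix.linftyOpSemiNormedRing
  letI : NormedRing (Matrix (Fin n) (Fin n) ℂ) := Matrix.linftyOpNormedRing
  letI : NormedAlgebra ℂ (Matrix (Fin n) (Fin n) ℂ) := Matrix.linftyOpNormedAlgebra
  exact exp_smul_idem P hP s

theorem complete_graph_return_fidelity_lower_bound (n : ℕ) (hn : 1 ≤ n) (t : ℝ)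
    (H : Matrix (Fin n) (Fin n) ℂ)
    (hH : H = ((n * (n - 5) / 2 : ℂ)) • (1 : Matrix (Fin n) (Fin n) ℂ)
        + 2 • (Matrix.of fun _ _ : Fin n => (1 : ℂ)))
    (i : Fin n) :
    1 - 2 / n ≤ ‖NormedSpace.exp ((-(Complex.I * t)) • H) i i‖ := by
  have hn0 : (n : ℂ) ≠ 0 := Nat.cast_ne_zero.2 (by omega)
  set c : ℂ := -(Complex.I * t) with hc
  set a : ℂ := (n * (n - 5) / 2 : ℂ) with ha
  set J : Matrix (Fin n) (Fin n) ℂ := Matrix.of fun _ _ => (1 : ℂ) with hJdef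
  have hJ : J * J = (n : ℂ) • J := by
    ext p q
    simp [hJdef, Matrix.mul_apply]
  set P : Matrix (Fin n) (Fin n) ℂ := (n : ℂ)⁻¹ • J with hPdef
  have hP : P * P = P := by
    rw [hPdef, Matrix.smul_mul, Matrix.mul_smul, hJ, smul_smul, smul_smul]
    congr 1
    field_simp
  have key : c • H = ((c * a) • (1 : Matrix (Fin n) (Fin n) ℂ)) + ((2 * c * n) • P) := by
    rw [hH]
    ext p q
    by_cases h : p = q <;>
      (simp [Matrix.add_apply, Matrix.smul_apply, Matrix.one_apply, h, hPdef, hJdef]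
       field_simp)
  have hcomm : Commute ((c * a) • (1 : Matrix (Fin n) (Fin n) ℂ)) ((2 * c * n) • P) :=
    ((Commute.one_left P).smul_left _).smul_right _
  have e1 : exp ((c * a) • (1 : Matrix (Fin n) (Fin n) ℂ)) = Complex.exp (c * a) • 1 := by
    rw [matrix_exp_smul_idem n 1 (by simp) (c * a), ← Complex.exp_eq_exp_ℂ]
    rw [sub_smul, one_smul]
    abel
  have e2 : exp ((2 * c * n) • P) = 1 + (Complex.exp (2 * c * n) - 1) • P := by
    rw [matrix_exp_smul_idem n P hP (2 * c * n), ← Complex.exp_eq_exp_ℂ]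
  have hE : exp (c • H) i i
      = Complex.exp (c * a) * (1 + (Complex.exp (2 * c * n) - 1) * (n : ℂ)⁻¹) := by
    rw [key, Matrix.exp_add_of_commute (h := hcomm), e1, e2, Matrix.smul_mul, Matrix.one_mul]
    simp [Matrix.smul_apply, Matrix.add_apply, Matrix.one_apply_eq, hPdef, hJdef]
  rw [hE, norm_mul]
  have habs : ∀ x : ℝ, ‖Complex.exp (-(Complex.I * x))‖ = 1 := by
    intro x
    rw [Complex.norm_exp]
    simp
  have h1 : c * a = -(Complex.I * ((t * (n * (n - 5) / 2) : ℝ) : ℂ)) := by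
    rw [hc, ha]; push_cast; ring
  have h2 : 2 * c * (n : ℂ) = -(Complex.I * ((2 * t * n : ℝ) : ℂ)) := by
    rw [hc]; push_cast; ring
  rw [h1, habs, one_mul]
  set z : ℂ := (Complex.exp (2 * c * n) - 1) * (n : ℂ)⁻¹ with hz
  have hb : ‖Complex.exp (2 * c * (n : ℂ)) - 1‖ ≤ 2 := by
    have h3 := norm_sub_le (Complex.exp (2 * c * (n : ℂ))) 1
    have h4 : ‖Complex.exp (2 * c * (n : ℂ))‖ = 1 := by rw [h2, habs]
    simp only [h4, norm_one] at h3
    linarith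
  have hzb : ‖z‖ ≤ 2 / n := by
    rw [hz, norm_mul, norm_inv, Complex.norm_natCast, div_eq_mul_inv]
    have : (0:ℝ) ≤ ((n:ℝ))⁻¹ := by positivity
    exact mul_le_mul_of_nonneg_right hb this
  have htri : (1 : ℝ) ≤ ‖1 + z‖ + ‖z‖ := by
    have h := norm_sub_le ((1 : ℂ) + z) z
    simp only [add_sub_cancel_right, norm_one] at h
    linarith
  linarith
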